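/- Two multisets of n complex numbers with equal power sums of orders 1 through n are equal. -/

import Mathlib

open MvPolynomial in
/-- Newton's identity for multisets of complex numbers. -/
lemma multiset_newton (n : ℕ) (S : Multiset ℂ) (hS : Multiset.card S = n) (k : ℕ) :
    (k : ℂ) * S.esymm k = (-1) ^ (k + 1) *
      ∑ a ∈ Finset.HasAntidiagonal.antidiagonal k with a.1 < k,
        (-1) ^ a.1 * S.esymm a.1 * (S.map (fun z => z ^ a.2)).sum := by
  obtain ⟨f, hf⟩ : ∃ f : Fin n → ℂ, Finset.univ.val.map f = S := by
    refine ⟨fun i => S.toList.get (Fin.cast (by simp [hS]) i), ?_⟩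
    have h1 : (Finset.univ.val : Multiset (Fin n)) = ↑(List.finRange n) := rfl
    rw [h1, Multiset.map_coe]
    have : List.map (fun i => S.toList.get (Fin.cast (by simp [hS]) i)) (List.finRange n)
        = S.toList := by
      apply List.ext_get (by simp [hS])
      intro i h1 h2
      simp
    rw [this, Multiset.coe_toList]
  have key := congrArg (aeval f) (mul_esymm_eq_sum (Fin n) ℂ k)
  have he : ∀ j, aeval f (esymm (Fin n) ℂ j) = S.esymm j := by
    intro j; rw [aeval_esymm_eq_multiset_esymm, hf]
  have hp : ∀ j, aeval f (psum (Fin n) ℂ j) = (S.map (fun z => z ^ j)).sum := by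
    intro j
    rw [psum, map_sum, ← hf, Multiset.map_map]
    simp [Finset.sum]
  simp only [map_mul, map_sum, map_pow, map_neg, map_one, map_natCast, he, hp] at key
  exact key

/-- Two multisets of `n` complex numbers with equal power sums of orders `1` through `n`
are equal. -/
theorem multiset_eq_of_powerSums_eq (n : ℕ) (S T : Multiset ℂ)
    (hS : Multiset.card S = n) (hT : Multiset.card T = n)
    (hpow : ∀ j ∈ Finset.Icc 1 n, (S.map (fun z => z ^ j)).sum = (T.map (fun z => z ^ j)).sum) :
    S = T := by
  have hesymm : ∀ k ≤ n, S.esymm k = T.esymm k := by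
    intro k
    induction k using Nat.strong_induction_on with
    | _ k ih =>
      intro hk
      rcases Nat.eq_zero_or_pos k with rfl | hk0
      · simp [Multiset.esymm]
      have h1 := multiset_newton n S hS k
      have h2 := multiset_newton n T hT k
      have hsum : ∑ a ∈ Finset.HasAntidiagonal.antidiagonal k with a.1 < k,
            (-1 : ℂ) ^ a.1 * S.esymm a.1 * (S.map (fun z => z ^ a.2)).sum =
          ∑ a ∈ Finset.HasAntidiagonal.antidiagonal k with a.1 < k,
            (-1) ^ a.1 * T.esymm a.1 * (T.map (fun z => z ^ a.2)).sum := by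
        apply Finset.sum_congr rfl
        intro a ha
        simp only [Finset.mem_filter, Finset.HasAntidiagonal.mem_antidiagonal] at ha
        obtain ⟨hak, halt⟩ := ha
        rw [ih a.1 halt (le_trans (le_of_lt halt) hk),
          hpow a.2 (Finset.mem_Icc.mpr ⟨by omega, by omega⟩)]
      have : (k : ℂ) * S.esymm k = (k : ℂ) * T.esymm k := by rw [h1, h2, hsum]
      exact mul_left_cancel₀ (Nat.cast_ne_zero.mpr (by omega)) this
  have hprod : (S.map fun t => Polynomial.X - Polynomial.C t).prod =
      (T.map fun t => Polynomial.X - Polynomial.C t).prod := by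
    rw [Multiset.prod_X_sub_X_eq_sum_esymm, Multiset.prod_X_sub_X_eq_sum_esymm, hS, hT]
    apply Finset.sum_congr rfl
    intro j hj
    rw [hesymm j (by simpa using Nat.lt_succ_iff.mp (Finset.mem_range.mp hj))]
  have := congrArg Polynomial.roots hprod
  rwa [Polynomial.roots_multiset_prod_X_sub_C, Polynomial.roots_multiset_prod_X_sub_C] at this
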